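/- arXiv:1707.03062 — 2 statements merged into one kernel-verified Lean document; each statement's English description precedes it below -/
import Mathlib

section
/- Let 0 < r < ∞ and let T be a bounded invariant linear operator on H with matrix symbol σ. Then T belongs to the Schatten class S_r(H) if and only if Σ_{ℓ=0}^{∞} ‖σ(ℓ)‖_{S_r}^r < ∞, and in that case ‖T‖_{S_r(H)} = (Σ_{ℓ=0}^{∞} ‖σ(ℓ)‖_{S_r}^r)^{1/r}. -/
open scoped InnerProductSpace ComplexOrder

/-- The singular values of a complex square matrix `A`: the square roots of the eigenvalues of
the positive semidefinite matrix `Aᴴ A`. -/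
noncomputable def matrixSingularValues {n : ℕ} (A : Matrix (Fin n) (Fin n) ℂ) : Fin n → ℝ :=
  fun i => Real.sqrt ((Matrix.posSemidef_conjTranspose_mul_self A).1.eigenvalues i)

/-- A Schmidt representation `T = Σ_k s_k ⟨ψ_k, ·⟩ φ_k` of an operator `T`, with `(ψ_k)`, `(φ_k)`
orthonormal and `s_k ≥ 0`; the `s_k` are then precisely the singular values of `T` (together
with possibly additional zeros), so that for `0 < r < ∞` the operator `T` belongs to the
Schatten class `S_r(H)` iff it has such a representation with `Σ_k s_k^r < ∞`, and then
`‖T‖_{S_r} = (Σ_k s_k^r)^{1/r}`. -/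
def IsSchmidtRep {H : Type*} [NormedAddCommGroup H] [InnerProductSpace ℂ H]
    (T : H →L[ℂ] H) (ψ φ : ℕ → H) (s : ℕ → ℝ) : Prop :=
  Orthonormal ℂ ψ ∧ Orthonormal ℂ φ ∧ (∀ k, 0 ≤ s k) ∧
    ∀ f : H, T f = ∑' k : ℕ, ((s k : ℂ) * ⟪ψ k, f⟫_ℂ) • φ k

namespace S11

open Complex Submodule Finset Matrix

noncomputable section

/-! ### Matrix-level facts -/

variable {n : ℕ}

def eigB (A : Matrix (Fin n) (Fin n) ℂ) : OrthonormalBasis (Fin n) ℂ (EuclideanSpace ℂ (Fin n)) :=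
  (Matrix.posSemidef_conjTranspose_mul_self A).1.eigenvectorBasis

def eigV (A : Matrix (Fin n) (Fin n) ℂ) : Fin n → ℝ :=
  (Matrix.posSemidef_conjTranspose_mul_self A).1.eigenvalues

lemma eigV_nonneg (A : Matrix (Fin n) (Fin n) ℂ) (i : Fin n) : 0 ≤ eigV A i :=
  (Matrix.posSemidef_conjTranspose_mul_self A).eigenvalues_nonneg i

lemma sv_eq (A : Matrix (Fin n) (Fin n) ℂ) (i : Fin n) :
    matrixSingularValues A i = Real.sqrt (eigV A i) := rfl

lemma sv_nonneg (A : Matrix (Fin n) (Fin n) ℂ) (i : Fin n) : 0 ≤ matrixSingularValues A i :=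
  Real.sqrt_nonneg _

lemma sv_sq (A : Matrix (Fin n) (Fin n) ℂ) (i : Fin n) :
    matrixSingularValues A i ^ 2 = eigV A i := Real.sq_sqrt (eigV_nonneg A i)

lemma sv_eq_zero_iff (A : Matrix (Fin n) (Fin n) ℂ) (i : Fin n) :
    matrixSingularValues A i = 0 ↔ eigV A i = 0 := by
  constructor
  · intro h
    have := sv_sq A i
    rw [h] at this
    simpa using this.symm
  · intro h
    rw [sv_eq, h, Real.sqrt_zero]

lemma mulVec_eigB (A : Matrix (Fin n) (Fin n) ℂ) (i : Fin n) :
    (Aᴴ * A) *ᵥ ⇑(eigB A i) = eigV A i • ⇑(eigB A i) :=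
  Matrix.IsHermitian.mulVec_eigenvectorBasis _ i

/-- `⟪A x, A y⟫ = ⟪x, (Aᴴ A) y⟫` in Euclidean space. -/
lemma inner_mulVec_mulVec (A : Matrix (Fin n) (Fin n) ℂ) (x y : EuclideanSpace ℂ (Fin n)) :
    ⟪(WithLp.equiv 2 (Fin n → ℂ)).symm (A *ᵥ ⇑x),
      (WithLp.equiv 2 (Fin n → ℂ)).symm (A *ᵥ ⇑y)⟫_ℂ
      = ⟪x, (WithLp.equiv 2 (Fin n → ℂ)).symm ((Aᴴ * A) *ᵥ ⇑y)⟫_ℂ := by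
  have h1 : (WithLp.equiv 2 (Fin n → ℂ)).symm (A *ᵥ ⇑x) = Matrix.toEuclideanLin A x := rfl
  have h2 : (WithLp.equiv 2 (Fin n → ℂ)).symm (A *ᵥ ⇑y) = Matrix.toEuclideanLin A y := rfl
  have h3 : (WithLp.equiv 2 (Fin n → ℂ)).symm ((Aᴴ * A) *ᵥ ⇑y)
      = Matrix.toEuclideanLin Aᴴ (Matrix.toEuclideanLin A y) := by
    have : (Aᴴ * A) *ᵥ ⇑y = Aᴴ *ᵥ (A *ᵥ ⇑y) := (Matrix.mulVec_mulVec _ _ _).symm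
    rw [this]; rfl
  rw [h1, h2, h3, Matrix.toEuclideanLin_conjTranspose_eq_adjoint, LinearMap.adjoint_inner_right]

lemma inner_mulVec_eigB (A : Matrix (Fin n) (Fin n) ℂ) (i j : Fin n) :
    ⟪(WithLp.equiv 2 (Fin n → ℂ)).symm (A *ᵥ ⇑(eigB A i)),
      (WithLp.equiv 2 (Fin n → ℂ)).symm (A *ᵥ ⇑(eigB A j))⟫_ℂ
      = if i = j then (eigV A j : ℂ) else 0 := by
  rw [inner_mulVec_mulVec, mulVec_eigB]
  have h4 : (WithLp.equiv 2 (Fin n → ℂ)).symm (eigV A j • ⇑(eigB A j))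
      = (eigV A j : ℂ) • eigB A j := by
    rw [RCLike.real_smul_eq_coe_smul (K := ℂ)]; rfl
  rw [h4, inner_smul_right]
  have h5 : ⟪eigB A i, eigB A j⟫_ℂ = if i = j then 1 else 0 :=
    orthonormal_iff_ite.mp (eigB A).orthonormal i j
  rw [h5]
  split <;> simp

/-- Left singular vectors: an orthonormal basis `b` with `A vᵢ = sᵢ • bᵢ`. -/
lemma exists_left_singular (A : Matrix (Fin n) (Fin n) ℂ) :
    ∃ b : OrthonormalBasis (Fin n) ℂ (EuclideanSpace ℂ (Fin n)),
      ∀ i, (WithLp.equiv 2 (Fin n → ℂ)).symm (A *ᵥ ⇑(eigB A i))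
        = (matrixSingularValues A i : ℂ) • b i := by
  classical
  set s : Finset (Fin n) := Finset.univ.filter (fun i => eigV A i ≠ 0) with hs
  set u : Fin n → EuclideanSpace ℂ (Fin n) :=
    fun i => ((matrixSingularValues A i : ℂ))⁻¹ •
      (WithLp.equiv 2 (Fin n → ℂ)).symm (A *ᵥ ⇑(eigB A i)) with hu_def
  have hsv_ne : ∀ i ∈ s, (matrixSingularValues A i : ℂ) ≠ 0 := by
    intro i hi
    have h1 : eigV A i ≠ 0 := by simpa [hs] using hi
    simp only [Ne, Complex.ofReal_eq_zero, sv_eq_zero_iff]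
    exact h1
  have hAv_zero : ∀ i, eigV A i = 0 →
      (WithLp.equiv 2 (Fin n → ℂ)).symm (A *ᵥ ⇑(eigB A i)) = 0 := by
    intro i hi
    have h := inner_mulVec_eigB A i i
    rw [if_pos rfl, hi] at h
    have h6 : ⟪(WithLp.equiv 2 (Fin n → ℂ)).symm (A *ᵥ ⇑(eigB A i)),
        (WithLp.equiv 2 (Fin n → ℂ)).symm (A *ᵥ ⇑(eigB A i))⟫_ℂ = 0 := by
      rw [h]; exact Complex.ofReal_zero
    exact inner_self_eq_zero.mp h6
  have key : ∀ i j, ⟪u i, u j⟫_ℂ =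
      (matrixSingularValues A i : ℂ)⁻¹ * ((matrixSingularValues A j : ℂ)⁻¹ *
        (if i = j then (eigV A j : ℂ) else 0)) := by
    intro i j
    rw [hu_def]
    simp only [inner_smul_left, inner_smul_right, inner_mulVec_eigB, map_inv₀,
      Complex.conj_ofReal]
    ring
  have hu : Orthonormal ℂ (s.restrict u) := by
    rw [orthonormal_iff_ite]
    rintro ⟨i, hi⟩ ⟨j, hj⟩
    have h2 : ⟪u i, u j⟫_ℂ = if i = j then 1 else 0 := by
      rw [key]
      by_cases hij : i = j
      · subst hij
        rw [if_pos rfl, if_pos rfl]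
        have hss : (eigV A i : ℂ)
            = (matrixSingularValues A i : ℂ) * (matrixSingularValues A i : ℂ) := by
          rw [← Complex.ofReal_mul, ← sq, sv_sq]
        rw [hss]
        field_simp
        exact div_self (hsv_ne i hi)
      · rw [if_neg hij, if_neg hij]; ring
    have h3 : (s.restrict u ⟨i, hi⟩) = u i := rfl
    have h4 : (s.restrict u ⟨j, hj⟩) = u j := rfl
    rw [h3, h4, h2]
    simp [Subtype.mk.injEq]
  obtain ⟨b, hb⟩ := hu.exists_orthonormalBasis_extension_of_card_eq
    (by simp [finrank_euclideanSpace])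
  refine ⟨b, fun i => ?_⟩
  by_cases hi : eigV A i = 0
  · rw [hAv_zero i hi]
    have h5 : matrixSingularValues A i = 0 := (sv_eq_zero_iff A i).mpr hi
    rw [h5]; simp
  · have his : i ∈ s := by simp [hs, hi]
    rw [hb i his, hu_def]
    rw [smul_smul, mul_inv_cancel₀ (hsv_ne i his), one_smul]

lemma eigB_sum_conj (A : Matrix (Fin n) (Fin n) ℂ) (k m : Fin n) :
    ∑ i, eigB A i k * starRingEnd ℂ (eigB A i m) = if m = k then 1 else 0 := by
  have h := OrthonormalBasis.sum_inner_mul_inner (eigB A)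
    (EuclideanSpace.single k (1 : ℂ)) (EuclideanSpace.single m (1 : ℂ))
  simp only [EuclideanSpace.inner_single_left, EuclideanSpace.inner_single_right,
    _root_.map_one, one_mul, mul_one, EuclideanSpace.single_apply] at h
  simpa using h

/-! ### Hilbert space block structure -/

variable {H : Type*} [NormedAddCommGroup H] [InnerProductSpace ℂ H] [CompleteSpace H]
variable {d : ℕ → ℕ}

/-- The vector in `H` with coordinates `c` in the `ℓ`-th block. -/
def vecH (e : HilbertBasis (Σ j : ℕ, Fin (d j)) ℂ H) (ℓ : ℕ) (c : Fin (d ℓ) → ℂ) : H :=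
  ∑ k, c k • (e ⟨ℓ, k⟩ : H)

variable (e : HilbertBasis (Σ j : ℕ, Fin (d j)) ℂ H)

lemma inner_e (i i' : Σ j : ℕ, Fin (d j)) :
    ⟪(e i : H), (e i' : H)⟫_ℂ = if i = i' then 1 else 0 :=
  orthonormal_iff_ite.mp e.orthonormal i i'

lemma vecH_inner_e_same (ℓ : ℕ) (c : Fin (d ℓ) → ℂ) (m : Fin (d ℓ)) :
    ⟪vecH e ℓ c, (e ⟨ℓ, m⟩ : H)⟫_ℂ = starRingEnd ℂ (c m) := by
  rw [vecH, sum_inner]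
  have h1 : ∀ k : Fin (d ℓ), ⟪c k • (e ⟨ℓ, k⟩ : H), (e ⟨ℓ, m⟩ : H)⟫_ℂ
      = starRingEnd ℂ (c k) * (if k = m then 1 else 0) := by
    intro k
    rw [inner_smul_left, inner_e]
    congr 1
    by_cases h : k = m <;> simp [h]
  rw [Finset.sum_congr rfl fun k _ => h1 k]
  simp

lemma vecH_inner_e_ne {ℓ j : ℕ} (h : ℓ ≠ j) (c : Fin (d ℓ) → ℂ) (m : Fin (d j)) :
    ⟪vecH e ℓ c, (e ⟨j, m⟩ : H)⟫_ℂ = 0 := by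
  rw [vecH, sum_inner]
  refine Finset.sum_eq_zero fun k _ => ?_
  rw [inner_smul_left, inner_e, if_neg (by simp [h]), mul_zero]

lemma vecH_inner_vecH_same (ℓ : ℕ) (c c' : Fin (d ℓ) → ℂ) :
    ⟪vecH e ℓ c, vecH e ℓ c'⟫_ℂ = ∑ k, starRingEnd ℂ (c k) * c' k := by
  rw [vecH, vecH, sum_inner]
  have h1 : ∀ k : Fin (d ℓ),
      ⟪c k • (e ⟨ℓ, k⟩ : H), ∑ k', c' k' • (e ⟨ℓ, k'⟩ : H)⟫_ℂ
        = starRingEnd ℂ (c k) * c' k := by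
    intro k
    rw [inner_sum]
    have h2 : ∀ k' : Fin (d ℓ), ⟪c k • (e ⟨ℓ, k⟩ : H), c' k' • (e ⟨ℓ, k'⟩ : H)⟫_ℂ
        = (starRingEnd ℂ (c k) * c' k') * (if k = k' then 1 else 0) := by
      intro k'
      rw [inner_smul_left, inner_smul_right, inner_e]
      by_cases h : k = k'
      · subst h; simp
      · rw [if_neg (by simp [h]), if_neg h]; ring
    rw [Finset.sum_congr rfl fun k' _ => h2 k']
    simp
  rw [Finset.sum_congr rfl fun k _ => h1 k]

lemma vecH_inner_vecH_ne {ℓ j : ℕ} (h : ℓ ≠ j) (c : Fin (d ℓ) → ℂ) (c' : Fin (d j) → ℂ) :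
    ⟪vecH e ℓ c, vecH e j c'⟫_ℂ = 0 := by
  rw [vecH]
  rw [sum_inner]
  refine Finset.sum_eq_zero fun k _ => ?_
  rw [inner_smul_left, vecH, inner_sum]
  refine mul_eq_zero_of_right _ (Finset.sum_eq_zero fun k' _ => ?_)
  rw [inner_smul_right, inner_e, if_neg (by simp [h]), mul_zero]

variable (T : H →L[ℂ] H) (σ : ∀ ℓ : ℕ, Matrix (Fin (d ℓ)) (Fin (d ℓ)) ℂ)

section Tfacts

variable
  (hinv : ∀ j : ℕ, ∀ x ∈ Submodule.span ℂ (Set.range fun k : Fin (d j) => (e ⟨j, k⟩ : H)),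
      T x ∈ Submodule.span ℂ (Set.range fun k : Fin (d j) => (e ⟨j, k⟩ : H)))
  (hσ : ∀ (ℓ : ℕ) (m k : Fin (d ℓ)), σ ℓ m k = ⟪(e ⟨ℓ, m⟩ : H), T (e ⟨ℓ, k⟩)⟫_ℂ)

include hinv hσ

lemma T_e (ℓ : ℕ) (k : Fin (d ℓ)) :
    T (e ⟨ℓ, k⟩) = vecH e ℓ (fun m => σ ℓ m k) := by
  have hmem : T (e ⟨ℓ, k⟩) ∈ Submodule.span ℂ
      (Set.range fun k' : Fin (d ℓ) => (e ⟨ℓ, k'⟩ : H)) :=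
    hinv ℓ _ (Submodule.subset_span ⟨k, rfl⟩)
  have expand : ∀ x ∈ Submodule.span ℂ (Set.range fun k' : Fin (d ℓ) => (e ⟨ℓ, k'⟩ : H)),
      x = ∑ m, ⟪(e ⟨ℓ, m⟩ : H), x⟫_ℂ • (e ⟨ℓ, m⟩ : H) := by
    intro x hx
    induction hx using Submodule.span_induction with
    | mem x hx =>
      obtain ⟨k', rfl⟩ := hx
      have h1 : ∀ m : Fin (d ℓ), ⟪(e ⟨ℓ, m⟩ : H), (e ⟨ℓ, k'⟩ : H)⟫_ℂ • (e ⟨ℓ, m⟩ : H)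
          = (if m = k' then (1:ℂ) else 0) • (e ⟨ℓ, m⟩ : H) := by
        intro m
        rw [inner_e]
        congr 1
        by_cases h : m = k' <;> simp [h]
      rw [Finset.sum_congr rfl fun m _ => h1 m]
      simp
    | zero => simp
    | add x y hx hy ihx ihy =>
      simp only [inner_add_right, add_smul, Finset.sum_add_distrib]
      rw [← ihx, ← ihy]
    | smul a x hx ih =>
      conv_lhs => rw [ih]
      simp [Finset.smul_sum, smul_smul, inner_smul_right]
  rw [expand _ hmem, vecH]
  exact Finset.sum_congr rfl fun m _ => by rw [← hσ]

lemma T_vecH (ℓ : ℕ) (c : Fin (d ℓ) → ℂ) :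
    T (vecH e ℓ c) = vecH e ℓ ((σ ℓ) *ᵥ c) := by
  rw [vecH, map_sum]
  simp only [_root_.map_smul, T_e e T σ hinv hσ]
  simp only [vecH, Finset.smul_sum, smul_smul]
  rw [Finset.sum_comm]
  refine Finset.sum_congr rfl fun m _ => ?_
  rw [← Finset.sum_smul]
  congr 1
  simp [Matrix.mulVec, dotProduct, mul_comm]

end Tfacts

/-- The eigenvector family `χ` in `H`. -/
def chi (w : Σ j : ℕ, Fin (d j)) : H := vecH e w.1 (fun k => eigB (σ w.1) w.2 k)

lemma chi_orthonormal : Orthonormal ℂ (chi e σ) := by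
  rw [orthonormal_iff_ite]
  rintro ⟨ℓ, i⟩ ⟨j, m⟩
  by_cases h : ℓ = j
  · subst h
    rw [chi, chi]
    simp only []
    rw [vecH_inner_vecH_same]
    have h5 : ⟪eigB (σ ℓ) i, eigB (σ ℓ) m⟫_ℂ = if i = m then 1 else 0 :=
      orthonormal_iff_ite.mp (eigB (σ ℓ)).orthonormal i m
    simp only [PiLp.inner_apply, RCLike.inner_apply] at h5
    simp only [mul_comm (starRingEnd ℂ _)]
    rw [h5]
    simp
  · rw [chi, chi]
    simp only []
    rw [vecH_inner_vecH_ne e h]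
    rw [if_neg (by simp [h])]

lemma chi_dense :
    ⊤ ≤ (Submodule.span ℂ (Set.range (chi e σ))).topologicalClosure := by
  have he : ∀ w : (Σ j : ℕ, Fin (d j)),
      (e w : H) ∈ Submodule.span ℂ (Set.range (chi e σ)) := by
    rintro ⟨ℓ, m⟩
    have key : (e ⟨ℓ, m⟩ : H)
        = ∑ i, (starRingEnd ℂ (eigB (σ ℓ) i m)) • chi e σ ⟨ℓ, i⟩ := by
      have expand : ∀ i : Fin (d ℓ),
          chi e σ ⟨ℓ, i⟩ = ∑ k, eigB (σ ℓ) i k • (e ⟨ℓ, k⟩ : H) := fun i => rfl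
      rw [Finset.sum_congr rfl fun i (_ : i ∈ Finset.univ) => by
        rw [expand i, Finset.smul_sum]]
      rw [Finset.sum_comm]
      have h4 : ∀ k : Fin (d ℓ),
          (∑ i, starRingEnd ℂ (eigB (σ ℓ) i m) • (eigB (σ ℓ) i k • (e ⟨ℓ, k⟩ : H)))
            = (if m = k then (1:ℂ) else 0) • (e ⟨ℓ, k⟩ : H) := by
        intro k
        have h3 : (∑ i, starRingEnd ℂ (eigB (σ ℓ) i m) * eigB (σ ℓ) i k)
            = if m = k then 1 else 0 := by
          rw [← eigB_sum_conj (σ ℓ) k m]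
          exact Finset.sum_congr rfl fun i _ => mul_comm _ _
        rw [← h3, Finset.sum_smul]
        exact Finset.sum_congr rfl fun i _ => smul_smul _ _ _
      rw [Finset.sum_congr rfl fun k _ => h4 k]
      simp
    rw [key]
    exact Submodule.sum_mem _ fun i _ =>
      Submodule.smul_mem _ _ (Submodule.subset_span ⟨⟨ℓ, i⟩, rfl⟩)
  rw [← e.dense_span]
  exact Submodule.topologicalClosure_mono (Submodule.span_le.mpr
    (by rintro x ⟨w, rfl⟩; exact he w))

lemma vecH_smul (ℓ : ℕ) (a : ℂ) (c : Fin (d ℓ) → ℂ) :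
    vecH e ℓ (fun k => a * c k) = a • vecH e ℓ c := by
  rw [vecH, vecH, Finset.smul_sum]
  exact Finset.sum_congr rfl fun k _ => (smul_smul a (c k) _).symm

/-- Orthonormality of a block family built from orthonormal bases. -/
lemma vecB_orthonormal (B : ∀ ℓ : ℕ, OrthonormalBasis (Fin (d ℓ)) ℂ (EuclideanSpace ℂ (Fin (d ℓ)))) :
    Orthonormal ℂ (fun w : Σ j : ℕ, Fin (d j) => vecH e w.1 (fun k => B w.1 w.2 k)) := by
  rw [orthonormal_iff_ite]
  rintro ⟨ℓ, i⟩ ⟨j, m⟩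
  by_cases h : ℓ = j
  · subst h
    simp only []
    rw [vecH_inner_vecH_same]
    have h5 : ⟪B ℓ i, B ℓ m⟫_ℂ = if i = m then 1 else 0 :=
      orthonormal_iff_ite.mp (B ℓ).orthonormal i m
    simp only [PiLp.inner_apply, RCLike.inner_apply] at h5
    simp only [mul_comm (starRingEnd ℂ _)]
    rw [h5]
    simp
  · simp only []
    rw [vecH_inner_vecH_ne e h]
    rw [if_neg (by simp [h])]

/-- The Hilbert basis of eigenvectors. -/
def WB : HilbertBasis (Σ j : ℕ, Fin (d j)) ℂ H :=
  HilbertBasis.mk (chi_orthonormal e σ) (chi_dense e σ)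

lemma WB_coe : ⇑(WB e σ) = chi e σ := HilbertBasis.coe_mk _ _

section Tfacts2

variable
  (hinv : ∀ j : ℕ, ∀ x ∈ Submodule.span ℂ (Set.range fun k : Fin (d j) => (e ⟨j, k⟩ : H)),
      T x ∈ Submodule.span ℂ (Set.range fun k : Fin (d j) => (e ⟨j, k⟩ : H)))
  (hσ : ∀ (ℓ : ℕ) (m k : Fin (d ℓ)), σ ℓ m k = ⟪(e ⟨ℓ, m⟩ : H), T (e ⟨ℓ, k⟩)⟫_ℂ)

include hinv hσ

lemma T_chi_inner (w : Σ j : ℕ, Fin (d j)) (y : H) :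
    ⟪T (chi e σ w), T y⟫_ℂ = (eigV (σ w.1) w.2 : ℂ) * ⟪chi e σ w, y⟫_ℂ := by
  obtain ⟨ℓ, i⟩ := w
  have hchi : chi e σ ⟨ℓ, i⟩ = vecH e ℓ (fun k => eigB (σ ℓ) i k) := rfl
  have hF : ((innerSL ℂ (T (chi e σ ⟨ℓ, i⟩))).comp T)
      = (eigV (σ ℓ) i : ℂ) • (innerSL ℂ (chi e σ ⟨ℓ, i⟩)) := by
    refine ContinuousLinearMap.ext_on
      (Submodule.dense_iff_topologicalClosure_eq_top.mpr e.dense_span) ?_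
    rintro _ ⟨⟨j, m⟩, rfl⟩
    simp only [ContinuousLinearMap.comp_apply, ContinuousLinearMap.smul_apply, innerSL_apply_apply,
      smul_eq_mul]
    rw [hchi, T_vecH e T σ hinv hσ, T_e e T σ hinv hσ]
    by_cases h : ℓ = j
    · subst h
      rw [vecH_inner_vecH_same, vecH_inner_e_same]
      have hAv : (((σ ℓ)ᴴ * σ ℓ) *ᵥ (fun k' => eigB (σ ℓ) i k'))
          = fun k => (eigV (σ ℓ) i : ℂ) * eigB (σ ℓ) i k := by
        funext k
        have h0 := congrFun (mulVec_eigB (σ ℓ) i) k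
        simpa [Complex.real_smul] using h0
      calc ∑ k, starRingEnd ℂ (((σ ℓ) *ᵥ (fun k' => eigB (σ ℓ) i k')) k) * σ ℓ k m
          = starRingEnd ℂ (∑ k, starRingEnd ℂ (σ ℓ k m)
              * ((σ ℓ) *ᵥ (fun k' => eigB (σ ℓ) i k')) k) := by
            rw [map_sum]
            refine Finset.sum_congr rfl fun k _ => ?_
            rw [_root_.map_mul, Complex.conj_conj, mul_comm]
        _ = starRingEnd ℂ (((σ ℓ)ᴴ *ᵥ ((σ ℓ) *ᵥ (fun k' => eigB (σ ℓ) i k'))) m) := by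
            congr 1
        _ = starRingEnd ℂ ((((σ ℓ)ᴴ * σ ℓ) *ᵥ (fun k' => eigB (σ ℓ) i k')) m) := by
            rw [Matrix.mulVec_mulVec]
        _ = starRingEnd ℂ ((eigV (σ ℓ) i : ℂ) * eigB (σ ℓ) i m) := by rw [hAv]
        _ = (eigV (σ ℓ) i : ℂ) * starRingEnd ℂ (eigB (σ ℓ) i m) := by
            rw [_root_.map_mul, Complex.conj_ofReal]
    · rw [vecH_inner_vecH_ne e h, vecH_inner_e_ne e h, mul_zero]
  have h9 := DFunLike.congr_fun hF y
  simpa only [ContinuousLinearMap.comp_apply, ContinuousLinearMap.smul_apply, innerSL_apply_apply,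
    smul_eq_mul] using h9

end Tfacts2

end

/-! ### Summability transfer lemmas -/

lemma ofReal_tsum_ne_top_iff {α : Type*} (f : α → ℝ) (hf : ∀ a, 0 ≤ f a) :
    (∑' a, ENNReal.ofReal (f a)) ≠ ⊤ ↔ Summable f := by
  have h1 : ∀ a, ENNReal.ofReal (f a) = (((f a).toNNReal : NNReal) : ENNReal) := fun a => rfl
  rw [tsum_congr h1, ENNReal.tsum_coe_ne_top_iff_summable]
  constructor
  · intro h
    exact (NNReal.summable_coe.mpr h).congr fun a => Real.coe_toNNReal (f a) (hf a)
  · intro h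
    rw [← NNReal.summable_coe]
    exact h.congr fun a => (Real.coe_toNNReal (f a) (hf a)).symm

lemma toReal_ofReal_tsum {α : Type*} (f : α → ℝ) (hf : ∀ a, 0 ≤ f a) (h : Summable f) :
    (∑' a, ENNReal.ofReal (f a)).toReal = ∑' a, f a := by
  rw [← ENNReal.ofReal_tsum_of_nonneg hf h, ENNReal.toReal_ofReal (tsum_nonneg hf)]

lemma hasSum_congr' {α β : Type*} [AddCommMonoid α] [TopologicalSpace α] {f g : β → α} {a : α}
    (h : HasSum f a) (hfg : ∀ b, f b = g b) : HasSum g a := by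
  rw [show g = f from (funext hfg).symm]
  exact h

/-- The master double-counting identity. -/
lemma master {ι : Type*} (r : ℝ) (hr : 0 < r) (s : ℕ → ℝ) (hs : ∀ k, 0 ≤ s k)
    (t : ι → ℝ) (ht : ∀ w, 0 ≤ t w) (p : ℕ → ι → ℝ) (hp : ∀ k w, 0 ≤ p k w)
    (hK1 : ∀ k w, p k w ≠ 0 → s k = t w)
    (hK2 : ∀ w, t w ≠ 0 → HasSum (fun k => p k w) 1)
    (hK3 : ∀ k, HasSum (fun w => p k w) 1) :
    ∑' k, ENNReal.ofReal (s k ^ r) = ∑' w, ENNReal.ofReal (t w ^ r) := by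
  have hps : ∀ k, ∑' w, ENNReal.ofReal (p k w) = 1 := by
    intro k
    rw [← ENNReal.ofReal_tsum_of_nonneg (hp k) (hK3 k).summable, (hK3 k).tsum_eq,
      ENNReal.ofReal_one]
  have hterm : ∀ k w, ENNReal.ofReal (s k ^ r) * ENNReal.ofReal (p k w)
      = ENNReal.ofReal (t w ^ r) * ENNReal.ofReal (p k w) := by
    intro k w
    by_cases h0 : p k w = 0
    · rw [h0, ENNReal.ofReal_zero, mul_zero, mul_zero]
    · rw [hK1 k w h0]
  calc ∑' k, ENNReal.ofReal (s k ^ r)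
      = ∑' k, ∑' w, ENNReal.ofReal (s k ^ r) * ENNReal.ofReal (p k w) := by
        refine tsum_congr fun k => ?_
        rw [ENNReal.tsum_mul_left, hps k, mul_one]
    _ = ∑' k, ∑' w, ENNReal.ofReal (t w ^ r) * ENNReal.ofReal (p k w) := by
        exact tsum_congr fun k => tsum_congr fun w => hterm k w
    _ = ∑' w, ∑' k, ENNReal.ofReal (t w ^ r) * ENNReal.ofReal (p k w) := ENNReal.tsum_comm
    _ = ∑' w, ENNReal.ofReal (t w ^ r) := by
        refine tsum_congr fun w => ?_
        by_cases h0 : t w = 0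
        · rw [h0, Real.zero_rpow hr.ne', ENNReal.ofReal_zero]
          simp
        · rw [ENNReal.tsum_mul_left,
            ← ENNReal.ofReal_tsum_of_nonneg (fun k => hp k w) (hK2 w h0).summable,
            (hK2 w h0).tsum_eq, ENNReal.ofReal_one, mul_one]

end S11

set_option maxHeartbeats 1000000 in
/-- for `0 < r < ∞`, a bounded invariant operator `T` with matrix symbol `σ`
belongs to the Schatten class `S_r(H)` iff `Σ_ℓ ‖σ(ℓ)‖_{S_r}^r < ∞`, in which case
`‖T‖_{S_r(H)} = (Σ_ℓ ‖σ(ℓ)‖_{S_r}^r)^{1/r}`. -/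
theorem statement11
    {H : Type*} [NormedAddCommGroup H] [InnerProductSpace ℂ H] [CompleteSpace H]
    (r : ℝ) (hr : 0 < r)
    (d : ℕ → ℕ) (hd : ∀ j, 0 < d j)
    (e : HilbertBasis (Σ j : ℕ, Fin (d j)) ℂ H)
    (T : H →L[ℂ] H)
    (hinv : ∀ j : ℕ, ∀ x ∈ Submodule.span ℂ (Set.range fun k : Fin (d j) => (e ⟨j, k⟩ : H)),
      T x ∈ Submodule.span ℂ (Set.range fun k : Fin (d j) => (e ⟨j, k⟩ : H)))
    (σ : ∀ ℓ : ℕ, Matrix (Fin (d ℓ)) (Fin (d ℓ)) ℂ)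
    (hσ : ∀ (ℓ : ℕ) (m k : Fin (d ℓ)),
      σ ℓ m k = ⟪(e ⟨ℓ, m⟩ : H), T (e ⟨ℓ, k⟩)⟫_ℂ) :
    ((∃ (ψ φ : ℕ → H) (s : ℕ → ℝ), IsSchmidtRep T ψ φ s ∧ Summable fun k => s k ^ r) ↔
      Summable fun ℓ : ℕ => ∑ i : Fin (d ℓ), matrixSingularValues (σ ℓ) i ^ r)
    ∧
    (∀ (ψ φ : ℕ → H) (s : ℕ → ℝ), IsSchmidtRep T ψ φ s → (Summable fun k => s k ^ r) →
      (∑' k : ℕ, s k ^ r) ^ (1 / r)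
        = (∑' ℓ : ℕ, ∑ i : Fin (d ℓ), matrixSingularValues (σ ℓ) i ^ r) ^ (1 / r)) := by
  classical
  have hg0 : ∀ w : (Σ j : ℕ, Fin (d j)), 0 ≤ matrixSingularValues (σ w.1) w.2 ^ r :=
    fun w => Real.rpow_nonneg (S11.sv_nonneg _ _) r
  have hIff : (Summable fun w : (Σ j : ℕ, Fin (d j)) => matrixSingularValues (σ w.1) w.2 ^ r)
      ↔ (Summable fun ℓ : ℕ => ∑ i : Fin (d ℓ), matrixSingularValues (σ ℓ) i ^ r) := by
    rw [summable_sigma_of_nonneg hg0]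
    constructor
    · rintro ⟨-, h2⟩
      exact h2.congr fun ℓ => by rw [tsum_fintype]
    · intro h
      exact ⟨fun ℓ => Summable.of_finite, h.congr fun ℓ => by rw [tsum_fintype]⟩
  have htsum_eq : (Summable fun w : (Σ j : ℕ, Fin (d j)) => matrixSingularValues (σ w.1) w.2 ^ r) →
      (∑' w : (Σ j : ℕ, Fin (d j)), matrixSingularValues (σ w.1) w.2 ^ r)
        = ∑' ℓ : ℕ, ∑ i : Fin (d ℓ), matrixSingularValues (σ ℓ) i ^ r := by
    intro h
    rw [Summable.tsum_sigma' (fun ℓ => Summable.of_finite) h]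
    exact tsum_congr fun ℓ => tsum_fintype _
  -- the master identity, valid for every Schmidt representation of `T`
  have main : ∀ (ψ φ : ℕ → H) (s : ℕ → ℝ), IsSchmidtRep T ψ φ s →
      (∑' k, ENNReal.ofReal (s k ^ r))
        = ∑' w : (Σ j : ℕ, Fin (d j)),
            ENNReal.ofReal (matrixSingularValues (σ w.1) w.2 ^ r) := by
    rintro ψ φ s ⟨hψ, hφ, hs0, hrep⟩
    have hψite : ∀ j k : ℕ, ⟪ψ j, ψ k⟫_ℂ = if j = k then 1 else 0 :=
      orthonormal_iff_ite.mp hψ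
    have hφite : ∀ j k : ℕ, ⟪φ j, φ k⟫_ℂ = if j = k then 1 else 0 :=
      orthonormal_iff_ite.mp hφ
    have hTψ : ∀ k, T (ψ k) = (s k : ℂ) • φ k := by
      intro k
      rw [hrep (ψ k), tsum_eq_single k (fun j hj => by
        rw [hψite j k, if_neg hj, mul_zero, zero_smul])]
      rw [hψite k k]
      simp
    have hsle : ∀ k, s k ≤ ‖T‖ := by
      intro k
      have h1 : ‖T (ψ k)‖ = s k := by
        rw [hTψ k, norm_smul, hφ.1 k, mul_one, Complex.norm_real, Real.norm_eq_abs,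
          abs_of_nonneg (hs0 k)]
      have h2 := T.le_opNorm (ψ k)
      rw [h1, hψ.1 k, mul_one] at h2
      exact h2
    have hsummable : ∀ x : H, Summable (fun k => ((s k : ℂ) * ⟪ψ k, x⟫_ℂ) • φ k) := by
      intro x
      have hOF := hφ.orthogonalFamily
      have h3 := (hOF.summable_iff_norm_sq_summable
        (fun k => (s k : ℂ) * ⟪ψ k, x⟫_ℂ)).mpr ?_
      · exact h3.congr (fun k => by rw [LinearIsometry.toSpanSingleton_apply])
      · refine Summable.of_nonneg_of_le (fun k => by positivity) (fun k => ?_)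
          ((hψ.inner_products_summable x).mul_left (‖T‖ ^ 2))
        rw [norm_mul, mul_pow]
        have h4 : ‖(s k : ℂ)‖ = s k := by
          rw [Complex.norm_real, Real.norm_eq_abs, abs_of_nonneg (hs0 k)]
        rw [h4]
        exact mul_le_mul_of_nonneg_right (pow_le_pow_left₀ (hs0 k) (hsle k) 2) (by positivity)
    have hHas : ∀ x : H, HasSum (fun k => ((s k : ℂ) * ⟪ψ k, x⟫_ℂ) • φ k) (T x) := by
      intro x
      have h5 := (hsummable x).hasSum
      rwa [← hrep x] at h5
    have hφT : ∀ (x : H) (k : ℕ), ⟪φ k, T x⟫_ℂ = (s k : ℂ) * ⟪ψ k, x⟫_ℂ := by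
      intro x k
      have h6 := (hHas x).mapL (innerSL ℂ (φ k))
      simp only [innerSL_apply_apply] at h6
      rw [← h6.tsum_eq, tsum_eq_single k (fun j hj => by
        rw [inner_smul_right, hφite k j, if_neg (Ne.symm hj), mul_zero])]
      rw [inner_smul_right, hφite k k]
      simp
    have hK1 : ∀ (k : ℕ) (w : Σ j : ℕ, Fin (d j)),
        ⟪S11.chi e σ w, ψ k⟫_ℂ ≠ 0 → s k = matrixSingularValues (σ w.1) w.2 := by
      intro k w hne
      have hq : ⟪T (S11.chi e σ w), T (ψ k)⟫_ℂ
          = ((s k : ℂ) * (s k : ℂ)) * ⟪S11.chi e σ w, ψ k⟫_ℂ := by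
        rw [hTψ k, inner_smul_right]
        have h4 : ⟪T (S11.chi e σ w), φ k⟫_ℂ
            = starRingEnd ℂ ((s k : ℂ) * ⟪ψ k, S11.chi e σ w⟫_ℂ) := by
          rw [← inner_conj_symm, hφT]
        rw [h4, _root_.map_mul, Complex.conj_ofReal, inner_conj_symm]
        ring
      have hq2 := S11.T_chi_inner e T σ hinv hσ w (ψ k)
      have h8 : ((s k : ℂ) * (s k : ℂ)) = (S11.eigV (σ w.1) w.2 : ℂ) :=
        mul_right_cancel₀ hne (by rw [← hq, hq2])
      have h9 : s k * s k = S11.eigV (σ w.1) w.2 := by exact_mod_cast h8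
      rw [S11.sv_eq, ← h9, Real.sqrt_mul_self (hs0 k)]
    have hK2 : ∀ w : Σ j : ℕ, Fin (d j), matrixSingularValues (σ w.1) w.2 ≠ 0 →
        HasSum (fun k => ‖⟪S11.chi e σ w, ψ k⟫_ℂ‖ ^ 2) 1 := by
      intro w hsv
      have hlam0 : S11.eigV (σ w.1) w.2 ≠ 0 := fun h => hsv (by rw [S11.sv_eq, h, Real.sqrt_zero])
      have hlamC : (S11.eigV (σ w.1) w.2 : ℂ) ≠ 0 := Complex.ofReal_ne_zero.mpr hlam0
      have h6 := (hHas (S11.chi e σ w)).mapL (innerSL ℂ (T (S11.chi e σ w)))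
      simp only [innerSL_apply_apply] at h6
      have hval : ⟪T (S11.chi e σ w), T (S11.chi e σ w)⟫_ℂ = (S11.eigV (σ w.1) w.2 : ℂ) := by
        rw [S11.T_chi_inner e T σ hinv hσ w]
        have h7 : ⟪S11.chi e σ w, S11.chi e σ w⟫_ℂ = 1 := by
          rw [inner_self_eq_norm_sq_to_K, (S11.chi_orthonormal e σ).1 w]
          norm_num
        rw [h7, mul_one]
      have hterm : (fun k => ⟪T (S11.chi e σ w), ((s k : ℂ) * ⟪ψ k, S11.chi e σ w⟫_ℂ) • φ k⟫_ℂ)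
          = fun k => (S11.eigV (σ w.1) w.2 : ℂ)
              * ((‖⟪S11.chi e σ w, ψ k⟫_ℂ‖ ^ 2 : ℝ) : ℂ) := by
        funext k
        rw [inner_smul_right]
        have h4 : ⟪T (S11.chi e σ w), φ k⟫_ℂ
            = starRingEnd ℂ ((s k : ℂ) * ⟪ψ k, S11.chi e σ w⟫_ℂ) := by
          rw [← inner_conj_symm, hφT]
        rw [h4, Complex.mul_conj]
        set z := ⟪S11.chi e σ w, ψ k⟫_ℂ with hz_def
        have hz : ⟪ψ k, S11.chi e σ w⟫_ℂ = starRingEnd ℂ z := (inner_conj_symm _ _).symm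
        by_cases h0 : z = 0
        · rw [hz, h0]
          simp
        · have hsk := hK1 k w h0
          have hss : s k * s k = S11.eigV (σ w.1) w.2 := by
            rw [hsk]
            have h10 := S11.sv_sq (σ w.1) w.2
            rwa [pow_two] at h10
          rw [hz, Complex.normSq_mul, Complex.normSq_conj, Complex.normSq_ofReal, hss]
          rw [Complex.ofReal_mul]
          congr 1
          rw [Complex.sq_norm]
      rw [hterm, hval] at h6
      have h11 := h6.mul_left ((S11.eigV (σ w.1) w.2 : ℂ))⁻¹
      simp only [← mul_assoc, inv_mul_cancel₀ hlamC, one_mul] at h11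
      rw [show ((1 : ℂ)) = ((1 : ℝ) : ℂ) by norm_num] at h11
      exact Complex.hasSum_ofReal.mp h11
    have hK3 : ∀ k, HasSum
        (fun w : Σ j : ℕ, Fin (d j) => ‖⟪S11.chi e σ w, ψ k⟫_ℂ‖ ^ 2) 1 := by
      intro k
      have hWB : ∀ w : Σ j : ℕ, Fin (d j), ((S11.WB e σ) w : H) = S11.chi e σ w :=
        fun w => congrFun (S11.WB_coe e σ) w
      have h7 := (S11.WB e σ).hasSum_inner_mul_inner (ψ k) (ψ k)
      have hval : ⟪ψ k, ψ k⟫_ℂ = 1 := by rw [hψite k k, if_pos rfl]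
      rw [hval] at h7
      have h7' : HasSum (fun w : Σ j : ℕ, Fin (d j) =>
          ((‖⟪S11.chi e σ w, ψ k⟫_ℂ‖ ^ 2 : ℝ) : ℂ)) 1 := by
        refine S11.hasSum_congr' h7 (fun w => ?_)
        rw [hWB w]
        have hz : ⟪ψ k, S11.chi e σ w⟫_ℂ
            = starRingEnd ℂ ⟪S11.chi e σ w, ψ k⟫_ℂ := (inner_conj_symm _ _).symm
        rw [hz, mul_comm, Complex.mul_conj]
        congr 1
        rw [Complex.sq_norm]
      rw [show ((1 : ℂ)) = ((1 : ℝ) : ℂ) by norm_num] at h7'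
      exact Complex.hasSum_ofReal.mp h7'
    exact S11.master r hr s hs0 _ (fun w => S11.sv_nonneg _ _)
      (fun k w => ‖⟪S11.chi e σ w, ψ k⟫_ℂ‖ ^ 2) (fun k w => by positivity)
      (fun k w h0 => hK1 k w (fun hz => h0 (by simp [hz]))) hK2 hK3
  -- construction of a Schmidt representation from block summability
  have construct : (Summable fun ℓ : ℕ => ∑ i : Fin (d ℓ), matrixSingularValues (σ ℓ) i ^ r) →
      ∃ (ψ φ : ℕ → H) (s : ℕ → ℝ), IsSchmidtRep T ψ φ s ∧ Summable fun k => s k ^ r := by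
    intro hsummable
    have hRsummable : Summable
        (fun w : (Σ j : ℕ, Fin (d j)) => matrixSingularValues (σ w.1) w.2 ^ r) :=
      hIff.mpr hsummable
    choose b hb using fun ℓ => S11.exists_left_singular (σ ℓ)
    have hInf : Infinite (Σ j : ℕ, Fin (d j)) :=
      Infinite.of_injective (fun j => (⟨j, ⟨0, hd j⟩⟩ : Σ j : ℕ, Fin (d j)))
        (fun a b h => congrArg Sigma.fst h)
    letI := hInf
    letI : Encodable (Σ j : ℕ, Fin (d j)) := Encodable.ofCountable _
    letI : Denumerable (Σ j : ℕ, Fin (d j)) := Denumerable.ofEncodableOfInfinite _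
    let κ : ℕ ≃ (Σ j : ℕ, Fin (d j)) := (Denumerable.eqv _).symm
    have hTchi : ∀ w : Σ j : ℕ, Fin (d j), T (S11.chi e σ w)
        = (matrixSingularValues (σ w.1) w.2 : ℂ)
            • S11.vecH e w.1 (fun k' => b w.1 w.2 k') := by
      intro w
      obtain ⟨ℓ, i⟩ := w
      have hchi : S11.chi e σ ⟨ℓ, i⟩ = S11.vecH e ℓ (fun k => S11.eigB (σ ℓ) i k) := rfl
      rw [hchi, S11.T_vecH e T σ hinv hσ]
      have hfun : ((σ ℓ).mulVec (fun k => S11.eigB (σ ℓ) i k))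
          = fun k => (matrixSingularValues (σ ℓ) i : ℂ) * b ℓ i k := by
        funext k
        have h0 := congrFun (congrArg (WithLp.equiv 2 (Fin (d ℓ) → ℂ)) (hb ℓ i)) k
        simpa using h0
      rw [hfun, S11.vecH_smul]
    refine ⟨fun k => S11.chi e σ (κ k),
        fun k => S11.vecH e (κ k).1 (fun k' => b (κ k).1 (κ k).2 k'),
        fun k => matrixSingularValues (σ (κ k).1) (κ k).2, ⟨?_, ?_, ?_, ?_⟩, ?_⟩
    · exact (S11.chi_orthonormal e σ).comp κ κ.injective
    · exact (S11.vecB_orthonormal e b).comp κ κ.injective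
    · exact fun k => S11.sv_nonneg _ _
    · intro f
      have hWB : ∀ w : Σ j : ℕ, Fin (d j), ((S11.WB e σ) w : H) = S11.chi e σ w :=
        fun w => congrFun (S11.WB_coe e σ) w
      have h1 := (S11.WB e σ).hasSum_repr f
      have h1' : HasSum (fun w => ⟪S11.chi e σ w, f⟫_ℂ • S11.chi e σ w) f :=
        S11.hasSum_congr' h1 (fun w => by
          rw [(S11.WB e σ).repr_apply_apply, hWB w])
      have h2 := h1'.mapL T
      have h3 : HasSum (fun w : Σ j : ℕ, Fin (d j) =>
          ((matrixSingularValues (σ w.1) w.2 : ℂ) * ⟪S11.chi e σ w, f⟫_ℂ)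
            • S11.vecH e w.1 (fun k' => b w.1 w.2 k')) (T f) :=
        S11.hasSum_congr' h2 (fun w => by
          rw [T.map_smul, hTchi w, smul_smul, mul_comm])
      have h4 := (Equiv.hasSum_iff κ).mpr h3
      exact h4.tsum_eq.symm
    · exact (Equiv.summable_iff κ).mpr hRsummable
  constructor
  · constructor
    · rintro ⟨ψ, φ, s, hrep, hsum⟩
      have h1 := main ψ φ s hrep
      have h2 : (∑' k, ENNReal.ofReal (s k ^ r)) ≠ ⊤ :=
        (S11.ofReal_tsum_ne_top_iff _
          (fun k => Real.rpow_nonneg (hrep.2.2.1 k) r)).mpr hsum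
      rw [h1] at h2
      exact hIff.mp ((S11.ofReal_tsum_ne_top_iff _ hg0).mp h2)
    · exact construct
  · intro ψ φ s hrep hsum
    have h1 := main ψ φ s hrep
    have hs0 := hrep.2.2.1
    have hLfin : (∑' k, ENNReal.ofReal (s k ^ r)) ≠ ⊤ :=
      (S11.ofReal_tsum_ne_top_iff _ (fun k => Real.rpow_nonneg (hs0 k) r)).mpr hsum
    have hRfin := hLfin
    rw [h1] at hRfin
    have hRsummable : Summable
        (fun w : (Σ j : ℕ, Fin (d j)) => matrixSingularValues (σ w.1) w.2 ^ r) :=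
      (S11.ofReal_tsum_ne_top_iff _ hg0).mp hRfin
    have hfinal : ∑' k, s k ^ r = ∑' ℓ : ℕ, ∑ i : Fin (d ℓ), matrixSingularValues (σ ℓ) i ^ r := by
      have hL := S11.toReal_ofReal_tsum _ (fun k => Real.rpow_nonneg (hs0 k) r) hsum
      have hR := S11.toReal_ofReal_tsum _ hg0 hRsummable
      rw [← hL, h1, hR, htsum_eq hRsummable]
    rw [hfinal]
end

section
/- Let (λ_ℓ)_{ℓ∈ℕ₀} be a sequence of nonnegative reals, ν > 0, s ∈ ℝ and m ∈ ℝ. Let T : H^∞ → H be an invariant linear operator whose matrix symbol σ satisfies the multiplier identity (Tf)^(ℓ) = σ(ℓ) f̂(ℓ) for all f ∈ H^∞ and ℓ ∈ ℕ₀, together with the bound ‖σ(ℓ)‖_op ≤ C (1 + λ_ℓ)^{m/ν} for all ℓ ∈ ℕ₀ and some constant C > 0, where ‖σ(ℓ)‖_op is the operator norm of σ(ℓ) on ℂ^{d_ℓ} with the ℓ² norm. Then for every f ∈ H^∞ one has the Sobolev-type estimate Σ_{ℓ=0}^{∞} (1 + λ_ℓ)^{2(s−m)/ν} |(Tf)^(ℓ)|²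 ≤ C² Σ_{ℓ=0}^{∞} (1 + λ_ℓ)^{2s/ν} |f̂(ℓ)|², where |·| denotes the Euclidean norm on ℂ^{d_ℓ}. -/
open scoped InnerProductSpace

/-- if an invariant operator `T` has a symbol `σ` satisfying the multiplier
identity `(Tf)^(ℓ) = σ(ℓ) f̂(ℓ)` and the bound `‖σ(ℓ)‖_op ≤ C (1 + λ_ℓ)^{m/ν}`, then the
Sobolev-type estimate
`Σ_ℓ (1 + λ_ℓ)^{2(s−m)/ν} |(Tf)^(ℓ)|² ≤ C² Σ_ℓ (1 + λ_ℓ)^{2s/ν} |f̂(ℓ)|²`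
holds for every `f ∈ H^∞` (sums of nonnegative terms, computed in `[0,∞]`). -/
theorem statement17
    {H : Type*} [NormedAddCommGroup H] [InnerProductSpace ℂ H] [CompleteSpace H]
    (Hinf : Submodule ℂ H) (hdense : Dense (Hinf : Set H))
    (d : ℕ → ℕ) (hd : ∀ j, 0 < d j)
    (e : HilbertBasis (Σ j : ℕ, Fin (d j)) ℂ H)
    (he : ∀ i : Σ j : ℕ, Fin (d j), (e i : H) ∈ Hinf)
    (lam : ℕ → ℝ) (hlam : ∀ ℓ, 0 ≤ lam ℓ)
    (ν : ℝ) (hν : 0 < ν) (s m : ℝ) (C : ℝ) (hC : 0 < C)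
    (T : Hinf →ₗ[ℂ] H)
    (hinv : ∀ j : ℕ, ∀ x : Hinf,
      (x : H) ∈ Submodule.span ℂ (Set.range fun k : Fin (d j) => (e ⟨j, k⟩ : H)) →
      T x ∈ Submodule.span ℂ (Set.range fun k : Fin (d j) => (e ⟨j, k⟩ : H)))
    (σ : ∀ ℓ : ℕ, Matrix (Fin (d ℓ)) (Fin (d ℓ)) ℂ)
    (hmult : ∀ (f : Hinf) (ℓ : ℕ) (m' : Fin (d ℓ)),
      ⟪(e ⟨ℓ, m'⟩ : H), T f⟫_ℂ = ∑ k : Fin (d ℓ), σ ℓ m' k * ⟪(e ⟨ℓ, k⟩ : H), (f : H)⟫_ℂ)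
    (hbound : ∀ ℓ : ℕ,
      ‖Matrix.toEuclideanCLM (𝕜 := ℂ) (σ ℓ)‖ ≤ C * (1 + lam ℓ) ^ (m / ν)) :
    ∀ f : Hinf,
      (∑' ℓ : ℕ, ENNReal.ofReal ((1 + lam ℓ) ^ (2 * (s - m) / ν) *
          ∑ m' : Fin (d ℓ), ‖⟪(e ⟨ℓ, m'⟩ : H), T f⟫_ℂ‖ ^ 2))
        ≤ ENNReal.ofReal (C ^ 2) *
          ∑' ℓ : ℕ, ENNReal.ofReal ((1 + lam ℓ) ^ (2 * s / ν) *
            ∑ k : Fin (d ℓ), ‖⟪(e ⟨ℓ, k⟩ : H), (f : H)⟫_ℂ‖ ^ 2) := by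

  intro f
  have key : ∀ ℓ : ℕ,
      (1 + lam ℓ) ^ (2 * (s - m) / ν) *
          ∑ m' : Fin (d ℓ), ‖⟪(e ⟨ℓ, m'⟩ : H), T f⟫_ℂ‖ ^ 2
      ≤ C ^ 2 * ((1 + lam ℓ) ^ (2 * s / ν) *
          ∑ k : Fin (d ℓ), ‖⟪(e ⟨ℓ, k⟩ : H), (f : H)⟫_ℂ‖ ^ 2) := by
    intro ℓ
    have hpos : (0:ℝ) < 1 + lam ℓ := by linarith [hlam ℓ]
    set v : EuclideanSpace ℂ (Fin (d ℓ)) :=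
      (WithLp.equiv 2 _).symm (fun k => ⟪(e ⟨ℓ, k⟩ : H), (f : H)⟫_ℂ) with hv
    set A := Matrix.toEuclideanCLM (𝕜 := ℂ) (σ ℓ) with hA
    have hAv : ∀ m' : Fin (d ℓ), (A v) m' = ⟪(e ⟨ℓ, m'⟩ : H), T f⟫_ℂ := by
      intro m'
      rw [hmult f ℓ m', hA, hv, WithLp.equiv_symm_apply, Matrix.toEuclideanCLM_toLp]
      simp [Matrix.toLin'_apply, Matrix.mulVec, dotProduct]
    have hsum1 : ∑ m' : Fin (d ℓ), ‖⟪(e ⟨ℓ, m'⟩ : H), T f⟫_ℂ‖ ^ 2 = ‖A v‖ ^ 2 := by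
      rw [EuclideanSpace.norm_eq, Real.sq_sqrt (by positivity)]
      exact Finset.sum_congr rfl fun m' _ => by rw [hAv m']
    have hsum2 : ∑ k : Fin (d ℓ), ‖⟪(e ⟨ℓ, k⟩ : H), (f : H)⟫_ℂ‖ ^ 2 = ‖v‖ ^ 2 := by
      rw [EuclideanSpace.norm_eq, Real.sq_sqrt (by positivity)]
      rfl
    rw [hsum1, hsum2]
    have h1 : ‖A v‖ ≤ C * (1 + lam ℓ) ^ (m / ν) * ‖v‖ :=
      le_trans (A.le_opNorm v) (by
        have := hbound ℓ
        exact mul_le_mul_of_nonneg_right this (norm_nonneg _))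
    have h2 : ‖A v‖ ^ 2 ≤ (C * (1 + lam ℓ) ^ (m / ν)) ^ 2 * ‖v‖ ^ 2 := by
      rw [← mul_pow]
      exact pow_le_pow_left₀ (norm_nonneg _) h1 2
    calc (1 + lam ℓ) ^ (2 * (s - m) / ν) * ‖A v‖ ^ 2
        ≤ (1 + lam ℓ) ^ (2 * (s - m) / ν) *
            ((C * (1 + lam ℓ) ^ (m / ν)) ^ 2 * ‖v‖ ^ 2) := by
          exact mul_le_mul_of_nonneg_left h2 (by positivity)
      _ = C ^ 2 * ((1 + lam ℓ) ^ (2 * s / ν) * ‖v‖ ^ 2) := by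
          have hexp : (1 + lam ℓ) ^ (2 * (s - m) / ν) *
              (1 + lam ℓ) ^ (m / ν * ((2:ℕ):ℝ)) = (1 + lam ℓ) ^ (2 * s / ν) := by
            rw [← Real.rpow_add hpos]
            congr 1
            push_cast
            field_simp
            ring
          rw [mul_pow, ← Real.rpow_natCast ((1 + lam ℓ) ^ (m / ν)) 2,
            ← Real.rpow_mul hpos.le]
          linear_combination (C ^ 2 * ‖v‖ ^ 2) * hexp
  calc (∑' ℓ : ℕ, ENNReal.ofReal ((1 + lam ℓ) ^ (2 * (s - m) / ν) *
          ∑ m' : Fin (d ℓ), ‖⟪(e ⟨ℓ, m'⟩ : H), T f⟫_ℂ‖ ^ 2))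
      ≤ ∑' ℓ : ℕ, ENNReal.ofReal (C ^ 2 * ((1 + lam ℓ) ^ (2 * s / ν) *
          ∑ k : Fin (d ℓ), ‖⟪(e ⟨ℓ, k⟩ : H), (f : H)⟫_ℂ‖ ^ 2)) :=
        ENNReal.tsum_le_tsum fun ℓ => ENNReal.ofReal_le_ofReal (key ℓ)
    _ = ENNReal.ofReal (C ^ 2) *
          ∑' ℓ : ℕ, ENNReal.ofReal ((1 + lam ℓ) ^ (2 * s / ν) *
            ∑ k : Fin (d ℓ), ‖⟪(e ⟨ℓ, k⟩ : H), (f : H)⟫_ℂ‖ ^ 2) := by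
        rw [← ENNReal.tsum_mul_left]
        exact tsum_congr fun ℓ => ENNReal.ofReal_mul (by positivity)
end
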